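/- arXiv:2511.09102 — 2 statements merged into one kernel-verified Lean document; each statement's English description precedes it below -/
import Mathlib

section
/- Conversely, if the SEO are incoherent, i.e., B_{a|x} = ∑_i β_{i|(a,x)} |i⟩⟨i| for some orthonormal basis {|i⟩} and coefficients 0 ≤ β_{i|(a,x)} ≤ 1, then the state assemblage admits the LHS decomposition σ_{a|x} = ∑_i β_{i|(a,x)} σ_i with σ_i = ρ_B^{1/2} |i⟩⟨i| ρ_B^{1/2}; each σ_i is positive semidefinite and ∑_i σ_i = ρ_B. -/
open Matrix Kronecker
open scoped ComplexOrder ENNReal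

/-- Singular values of a complex square matrix: square roots of eigenvalues of `Aᴴ * A`. -/
noncomputable def singularValues {d : ℕ} (A : Matrix (Fin d) (Fin d) ℂ) (i : Fin d) : ℝ :=
  Real.sqrt ((Matrix.isHermitian_conjTranspose_mul_self A).eigenvalues i)

/-- The square root of a positive semidefinite matrix, as `Matrix.PosSemidef.sqrt` was
defined in the older Mathlib (since removed there). -/
noncomputable def Matrix.PosSemidef.sqrt {n 𝕜 : Type*} [Fintype n] [DecidableEq n] [RCLike 𝕜]
    {A : Matrix n n 𝕜} (hA : A.PosSemidef) : Matrix n n 𝕜 :=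
  hA.1.eigenvectorUnitary.1 * diagonal ((↑) ∘ (√·) ∘ hA.1.eigenvalues) *
    (star hA.1.eigenvectorUnitary : Matrix n n 𝕜)

theorem Matrix.PosSemidef.sqrt_mul_self {n 𝕜 : Type*} [Fintype n] [DecidableEq n] [RCLike 𝕜]
    {A : Matrix n n 𝕜} (hA : A.PosSemidef) : hA.sqrt * hA.sqrt = A := by
  have hU : (star hA.1.eigenvectorUnitary : Matrix n n 𝕜) * hA.1.eigenvectorUnitary = 1 :=
    Unitary.coe_star_mul_self _
  have hD : diagonal ((↑) ∘ (√·) ∘ hA.1.eigenvalues) * diagonal ((↑) ∘ (√·) ∘ hA.1.eigenvalues)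
      = diagonal (RCLike.ofReal ∘ hA.1.eigenvalues : n → 𝕜) := by
    rw [diagonal_mul_diagonal]
    congr 1
    funext i
    simp only [Function.comp_apply]
    rw [← RCLike.ofReal_mul, Real.mul_self_sqrt (hA.eigenvalues_nonneg i)]
  conv_rhs => rw [hA.1.spectral_theorem, Unitary.conjStarAlgAut_apply]
  unfold Matrix.PosSemidef.sqrt
  calc _ = (hA.1.eigenvectorUnitary : Matrix n n 𝕜) * diagonal ((↑) ∘ (√·) ∘ hA.1.eigenvalues) *
        ((star hA.1.eigenvectorUnitary : Matrix n n 𝕜) * hA.1.eigenvectorUnitary.1) *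
        diagonal ((↑) ∘ (√·) ∘ hA.1.eigenvalues) * (star hA.1.eigenvectorUnitary : Matrix n n 𝕜) := by
          simp only [mul_assoc]
    _ = _ := by rw [hU, mul_one, mul_assoc _ (diagonal _) (diagonal _), hD]

theorem Matrix.PosSemidef.isHermitian_sqrt {n 𝕜 : Type*} [Fintype n] [DecidableEq n] [RCLike 𝕜]
    {A : Matrix n n 𝕜} (hA : A.PosSemidef) : hA.sqrt.IsHermitian := by
  unfold Matrix.PosSemidef.sqrt
  simp [IsHermitian, conjTranspose_mul, diagonal_conjTranspose, mul_assoc, Matrix.star_eq_conjTranspose]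
  have h : star (RCLike.ofReal ∘ (fun x => √x) ∘ hA.1.eigenvalues : n → 𝕜)
      = RCLike.ofReal ∘ (fun x => √x) ∘ hA.1.eigenvalues := by
    funext i; simp
  rw [h]

/-- Schatten `p`-norm of a complex square matrix. -/
noncomputable def schattenNorm {d : ℕ} (p : ℝ≥0∞) (A : Matrix (Fin d) (Fin d) ℂ) : ℝ :=
  if p = ⊤ then ⨆ i, singularValues A i
  else (∑ i, (singularValues A i) ^ p.toReal) ^ (1 / p.toReal)

/-- Commutator of matrices. -/
noncomputable def mcomm {d : ℕ} (A B : Matrix (Fin d) (Fin d) ℂ) : Matrix (Fin d) (Fin d) ℂ :=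
  A * B - B * A

/-- Partial trace over the first (A) tensor factor. -/
noncomputable def ptraceA {dA dB : ℕ} (ρ : Matrix (Fin dA × Fin dB) (Fin dA × Fin dB) ℂ) :
    Matrix (Fin dB) (Fin dB) ℂ :=
  fun j j' => ∑ i, ρ (i, j) (i, j')

/-- if the SEO are incoherent, `B_{a|x} = ∑_i β_{i|(a,x)} |i⟩⟨i|` with
`0 ≤ β ≤ 1`, then `σ_{a|x} = ∑_i β_{i|(a,x)} σ_i` with `σ_i = ρ_B^{1/2}|i⟩⟨i|ρ_B^{1/2}`;
each `σ_i` is PSD and `∑_i σ_i = ρ_B`. -/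
theorem stmt3 {d : ℕ} {A X : Type*} [Fintype A]
    (ρB : Matrix (Fin d) (Fin d) ℂ) (hρ : ρB.PosDef) (htr : ρB.trace = 1)
    (σ : A → X → Matrix (Fin d) (Fin d) ℂ) (hsum : ∀ x, ∑ a, σ a x = ρB)
    (v : Fin d → Fin d → ℂ)
    (hortho : ∀ i j, dotProduct (star (v i)) (v j) = if i = j then 1 else 0)
    (β : A → X → Fin d → ℝ) (hβ0 : ∀ a x i, 0 ≤ β a x i) (hβ1 : ∀ a x i, β a x i ≤ 1)
    (hSEO : ∀ a x, hρ.posSemidef.sqrt⁻¹ * σ a x * hρ.posSemidef.sqrt⁻¹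
        = ∑ i, (β a x i : ℂ) • Matrix.vecMulVec (v i) (star (v i))) :
    (∀ a x, σ a x = ∑ i, (β a x i : ℂ) •
        (hρ.posSemidef.sqrt * Matrix.vecMulVec (v i) (star (v i)) * hρ.posSemidef.sqrt)) ∧
    (∀ i, (hρ.posSemidef.sqrt * Matrix.vecMulVec (v i) (star (v i)) * hρ.posSemidef.sqrt).PosSemidef) ∧
    (∑ i, hρ.posSemidef.sqrt * Matrix.vecMulVec (v i) (star (v i)) * hρ.posSemidef.sqrt = ρB) := by
  set S := hρ.posSemidef.sqrt with hS
  have hSS : S * S = ρB := hρ.posSemidef.sqrt_mul_self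
  have hdet : IsUnit S.det := by
    have h : S.det * S.det = ρB.det := by rw [← Matrix.det_mul, hSS]
    have hρdet : ρB.det ≠ 0 := hρ.det_pos.ne'
    exact isUnit_iff_ne_zero.mpr fun h0 => hρdet (by rw [← h, h0, mul_zero])
  have hinv1 : S * S⁻¹ = 1 := Matrix.mul_nonsing_inv S hdet
  have hinv2 : S⁻¹ * S = 1 := Matrix.nonsing_inv_mul S hdet
  have hPSD : ∀ i, (S * Matrix.vecMulVec (v i) (star (v i)) * S).PosSemidef := by
    intro i
    have hv : Matrix.vecMulVec (v i) (star (v i))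
        = Matrix.replicateCol (Fin 1) (v i) * (Matrix.replicateCol (Fin 1) (v i))ᴴ := by
      rw [Matrix.conjTranspose_replicateCol, Matrix.vecMulVec_eq (Fin 1)]; rfl
    have h1 : (Matrix.vecMulVec (v i) (star (v i))).PosSemidef := by
      rw [hv]; exact Matrix.posSemidef_self_mul_conjTranspose _
    have := h1.mul_mul_conjTranspose_same S
    rwa [hρ.posSemidef.isHermitian_sqrt.eq] at this
  have hsumv : ∑ i, Matrix.vecMulVec (v i) (star (v i)) = 1 := by
    let M : Matrix (Fin d) (Fin d) ℂ := Matrix.of fun i j => (starRingEnd ℂ) (v i j)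
    have hMMH : M * Mᴴ = 1 := by
      ext i j
      simp only [Matrix.mul_apply, Matrix.conjTranspose_apply, Matrix.one_apply, M,
        Matrix.of_apply]
      have := hortho i j
      simp only [dotProduct, Pi.star_apply, RCLike.star_def] at this
      rw [← this]
      exact Finset.sum_congr rfl fun k _ => by simp [mul_comm]
    have hMHM : Mᴴ * M = 1 := mul_eq_one_comm.mp hMMH
    ext j k
    have := congrFun (congrFun hMHM j) k
    simp only [Matrix.mul_apply, Matrix.conjTranspose_apply, M, Matrix.of_apply,
      RingHomCompTriple.comp_apply, RingHom.id_apply] at this ⊢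
    simp only [Matrix.sum_apply, Matrix.vecMulVec_apply, Pi.star_apply, RCLike.star_def,
      Matrix.one_apply] at *
    rw [← this]
    exact Finset.sum_congr rfl fun i _ => by simp
  refine ⟨?_, hPSD, ?_⟩
  · intro a x
    have h := hSEO a x
    have : S * (S⁻¹ * σ a x * S⁻¹) * S = S * (∑ i, (β a x i : ℂ) • Matrix.vecMulVec (v i) (star (v i))) * S := by rw [h]
    calc σ a x = S * (S⁻¹ * σ a x * S⁻¹) * S := by
          rw [mul_assoc, mul_assoc, mul_assoc, hinv2, ← mul_assoc S S⁻¹, hinv1, one_mul, mul_one]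
      _ = S * (∑ i, (β a x i : ℂ) • Matrix.vecMulVec (v i) (star (v i))) * S := this
      _ = ∑ i, (β a x i : ℂ) • (S * Matrix.vecMulVec (v i) (star (v i)) * S) := by
          rw [Finset.mul_sum, Finset.sum_mul]
          exact Finset.sum_congr rfl fun i _ => by
            rw [Matrix.mul_smul, Matrix.smul_mul]
  · rw [← Finset.sum_mul, ← Finset.mul_sum, hsumv, mul_one, hSS]
end

section
/- Suppose for each μ the guessing probability satisfies p_g^{(μ)} ≤ (1 + cos θ_μ)/2 and the steerability witness satisfies S_Υ^{(μ)} ≤ sin θ_μ with θ_μ ∈ [0, π/2], and suppose the total witness obeys convexity S_Υ ≤ ∑_μ q_μ S_Υ^{(μ)} for a probability distribution {q_μ}. Then the average guessing probability p_g = ∑_μ q_μ p_g^{(μ)} satisfies p_g ≤ (1/2)(1 + √(1 − S_Υ²)). -/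
open Matrix Kronecker
open scoped ComplexOrder ENNReal

/-- combining `p_g^{(μ)} ≤ (1+cos θ_μ)/2`, `S_Υ^{(μ)} ≤ sin θ_μ` and convexity
`S_Υ ≤ ∑ q_μ S_Υ^{(μ)}` yields `p_g = ∑ q_μ p_g^{(μ)} ≤ (1+√(1−S_Υ²))/2`. -/
theorem stmt16 {I : Type*} [Fintype I] (q : I → ℝ) (hq : ∀ μ, 0 ≤ q μ) (hq1 : ∑ μ, q μ = 1)
    (θ : I → ℝ) (hθ : ∀ μ, θ μ ∈ Set.Icc (0 : ℝ) (Real.pi / 2))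
    (pg : I → ℝ) (hpg0 : ∀ μ, 0 ≤ pg μ)
    (hpg : ∀ μ, pg μ ≤ (1 + Real.cos (θ μ)) / 2)
    (Sμ : I → ℝ) (hSμ0 : ∀ μ, 0 ≤ Sμ μ) (hSμ : ∀ μ, Sμ μ ≤ Real.sin (θ μ))
    (S : ℝ) (hS0 : 0 ≤ S) (hS : S ≤ ∑ μ, q μ * Sμ μ) :
    ∑ μ, q μ * pg μ ≤ (1 / 2) * (1 + Real.sqrt (1 - S ^ 2)) := by
  -- pointwise bound: pg μ ≤ (1 + √(1 - Sμ μ ^ 2)) / 2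
  have hpt : ∀ μ, pg μ ≤ (1 + Real.sqrt (1 - Sμ μ ^ 2)) / 2 := by
    intro μ
    obtain ⟨h0, h1⟩ := hθ μ
    have hcos : Real.cos (θ μ) = Real.sqrt (1 - Real.sin (θ μ) ^ 2) := by
      rw [← Real.cos_sq' (θ μ)]
      exact (Real.sqrt_sq (Real.cos_nonneg_of_mem_Icc
        ⟨by linarith [Real.pi_pos], h1⟩)).symm
    have hmono : Real.sqrt (1 - Real.sin (θ μ) ^ 2) ≤ Real.sqrt (1 - Sμ μ ^ 2) := by
      apply Real.sqrt_le_sqrt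
      have := hSμ μ
      nlinarith [hSμ0 μ]
    calc pg μ ≤ (1 + Real.cos (θ μ)) / 2 := hpg μ
      _ ≤ (1 + Real.sqrt (1 - Sμ μ ^ 2)) / 2 := by rw [hcos]; linarith
  have hSμ1 : ∀ μ, Sμ μ ≤ 1 := fun μ => (hSμ μ).trans (Real.sin_le_one _)
  -- sum bound
  have hsum : ∑ μ, q μ * pg μ ≤ (1 + ∑ μ, q μ * Real.sqrt (1 - Sμ μ ^ 2)) / 2 := by
    have : ∑ μ, q μ * pg μ ≤ ∑ μ, q μ * ((1 + Real.sqrt (1 - Sμ μ ^ 2)) / 2) :=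
      Finset.sum_le_sum fun μ _ => mul_le_mul_of_nonneg_left (hpt μ) (hq μ)
    calc ∑ μ, q μ * pg μ ≤ ∑ μ, q μ * ((1 + Real.sqrt (1 - Sμ μ ^ 2)) / 2) := this
      _ = ((∑ μ, q μ) + ∑ μ, q μ * Real.sqrt (1 - Sμ μ ^ 2)) / 2 := by
          rw [← Finset.sum_add_distrib]; rw [Finset.sum_div]; congr 1; ext μ; ring
      _ = (1 + ∑ μ, q μ * Real.sqrt (1 - Sμ μ ^ 2)) / 2 := by rw [hq1]
  -- Cauchy-Schwarz: T := ∑ q √(1-Sμ²) ≤ √(1 - ∑ q Sμ²)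
  set T := ∑ μ, q μ * Real.sqrt (1 - Sμ μ ^ 2) with hT
  have hCS : T ≤ Real.sqrt (1 - ∑ μ, q μ * Sμ μ ^ 2) := by
    have h1 : ∀ μ, q μ * Real.sqrt (1 - Sμ μ ^ 2)
        = Real.sqrt (q μ) * Real.sqrt (q μ * (1 - Sμ μ ^ 2)) := by
      intro μ
      rw [Real.sqrt_mul (hq μ), ← mul_assoc, Real.mul_self_sqrt (hq μ)]
    calc T = ∑ μ, Real.sqrt (q μ) * Real.sqrt (q μ * (1 - Sμ μ ^ 2)) := by
            simp_rw [hT, h1]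
      _ ≤ Real.sqrt (∑ μ, q μ) * Real.sqrt (∑ μ, q μ * (1 - Sμ μ ^ 2)) :=
          Real.sum_sqrt_mul_sqrt_le _ hq (fun μ =>
            mul_nonneg (hq μ) (by nlinarith [hSμ1 μ, hSμ0 μ]))
      _ = Real.sqrt (1 - ∑ μ, q μ * Sμ μ ^ 2) := by
          rw [hq1, Real.sqrt_one, one_mul]
          congr 1
          simp [mul_sub, Finset.sum_sub_distrib, hq1]
  -- second Cauchy-Schwarz: (∑ q Sμ)² ≤ ∑ q Sμ²
  have hCS2 : (∑ μ, q μ * Sμ μ) ^ 2 ≤ ∑ μ, q μ * Sμ μ ^ 2 := by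
    have := Finset.sum_mul_sq_le_sq_mul_sq Finset.univ
      (fun μ => Real.sqrt (q μ)) (fun μ => Real.sqrt (q μ) * Sμ μ)
    have e1 : ∀ μ, Real.sqrt (q μ) * (Real.sqrt (q μ) * Sμ μ) = q μ * Sμ μ := by
      intro μ; rw [← mul_assoc, Real.mul_self_sqrt (hq μ)]
    have e2 : ∀ μ, Real.sqrt (q μ) ^ 2 = q μ := fun μ => Real.sq_sqrt (hq μ)
    have e3 : ∀ μ, (Real.sqrt (q μ) * Sμ μ) ^ 2 = q μ * Sμ μ ^ 2 := by
      intro μ; rw [mul_pow, e2]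
    simp_rw [e1, e2, e3] at this
    simpa [hq1] using this
  have hS2 : S ^ 2 ≤ ∑ μ, q μ * Sμ μ ^ 2 := by
    have : S ^ 2 ≤ (∑ μ, q μ * Sμ μ) ^ 2 := by
      apply pow_le_pow_left₀ hS0 hS
    linarith
  have hfinal : T ≤ Real.sqrt (1 - S ^ 2) :=
    hCS.trans (Real.sqrt_le_sqrt (by linarith))
  calc ∑ μ, q μ * pg μ ≤ (1 + T) / 2 := hsum
    _ ≤ (1 + Real.sqrt (1 - S ^ 2)) / 2 := by linarith
    _ = (1 / 2) * (1 + Real.sqrt (1 - S ^ 2)) := by ring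
end
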